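/- One has B(δ_G − δ_K, δ_G − δ_K) = 128; the set Λ = {v ∈ Φ⁺ : B(v, δ_K) < 0} has exactly 13 elements and Σ_{v∈Λ} B(v, δ_K) = −41. Consequently, for the rescaled inner product ⟨·,·⟩ = (1/36)B, one has 2⟨δ_G − δ_K, δ_G − δ_K⟩ + 4 Σ_{v∈Λ} ⟨v, δ_K⟩ + 64/8 = 95/9. -/

import Mathlib

set_option synthInstance.maxSize 100000
set_option synthInstance.maxHeartbeats 1000000
set_option maxHeartbeats 2000000

/-- The Cartan matrix of `E7` in Bourbaki labeling. -/
def CartanE7 : Matrix (Fin 7) (Fin 7) ℚ :=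
  !![2, 0, -1, 0, 0, 0, 0; 0, 2, 0, -1, 0, 0, 0; -1, 0, 2, -1, 0, 0, 0;
    0, -1, -1, 2, -1, 0, 0; 0, 0, 0, -1, 2, -1, 0; 0, 0, 0, 0, -1, 2, -1;
    0, 0, 0, 0, 0, -1, 2]

/-- The bilinear form `B` determined by the Cartan matrix of `E7` in the simple root
basis (all simple roots long, `B(alpha_i, alpha_i) = 2`). -/
def BE7 (v w : Fin 7 → ℚ) : ℚ := ∑ i, ∑ j, v i * CartanE7 i j * w j

/-- A root of `E7`: an integer vector `v` in the simple root basis with `B(v,v) = 2`. -/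
def IsRootE7 (v : Fin 7 → ℚ) : Prop := (∀ i, ∃ n : ℤ, v i = n) ∧ BE7 v v = 2

lemma BE7_expand (v w : Fin 7 → ℚ) : BE7 v w =
    2*(v 0*w 0 + v 1*w 1 + v 2*w 2 + v 3*w 3 + v 4*w 4 + v 5*w 5 + v 6*w 6)
    - (v 0*w 2 + v 2*w 0) - (v 1*w 3 + v 3*w 1) - (v 2*w 3 + v 3*w 2)
    - (v 3*w 4 + v 4*w 3) - (v 4*w 5 + v 5*w 4) - (v 5*w 6 + v 6*w 5) := by
  simp only [BE7, Fin.sum_univ_seven,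
    show CartanE7 0 0 = (2:ℚ) by decide,
    show CartanE7 0 1 = (0:ℚ) by decide,
    show CartanE7 0 2 = (-1:ℚ) by decide,
    show CartanE7 0 3 = (0:ℚ) by decide,
    show CartanE7 0 4 = (0:ℚ) by decide,
    show CartanE7 0 5 = (0:ℚ) by decide,
    show CartanE7 0 6 = (0:ℚ) by decide,
    show CartanE7 1 0 = (0:ℚ) by decide,
    show CartanE7 1 1 = (2:ℚ) by decide,
    show CartanE7 1 2 = (0:ℚ) by decide,
    show CartanE7 1 3 = (-1:ℚ) by decide,
    show CartanE7 1 4 = (0:ℚ) by decide,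
    show CartanE7 1 5 = (0:ℚ) by decide,
    show CartanE7 1 6 = (0:ℚ) by decide,
    show CartanE7 2 0 = (-1:ℚ) by decide,
    show CartanE7 2 1 = (0:ℚ) by decide,
    show CartanE7 2 2 = (2:ℚ) by decide,
    show CartanE7 2 3 = (-1:ℚ) by decide,
    show CartanE7 2 4 = (0:ℚ) by decide,
    show CartanE7 2 5 = (0:ℚ) by decide,
    show CartanE7 2 6 = (0:ℚ) by decide,
    show CartanE7 3 0 = (0:ℚ) by decide,
    show CartanE7 3 1 = (-1:ℚ) by decide,
    show CartanE7 3 2 = (-1:ℚ) by decide,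
    show CartanE7 3 3 = (2:ℚ) by decide,
    show CartanE7 3 4 = (-1:ℚ) by decide,
    show CartanE7 3 5 = (0:ℚ) by decide,
    show CartanE7 3 6 = (0:ℚ) by decide,
    show CartanE7 4 0 = (0:ℚ) by decide,
    show CartanE7 4 1 = (0:ℚ) by decide,
    show CartanE7 4 2 = (0:ℚ) by decide,
    show CartanE7 4 3 = (-1:ℚ) by decide,
    show CartanE7 4 4 = (2:ℚ) by decide,
    show CartanE7 4 5 = (-1:ℚ) by decide,
    show CartanE7 4 6 = (0:ℚ) by decide,
    show CartanE7 5 0 = (0:ℚ) by decide,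
    show CartanE7 5 1 = (0:ℚ) by decide,
    show CartanE7 5 2 = (0:ℚ) by decide,
    show CartanE7 5 3 = (0:ℚ) by decide,
    show CartanE7 5 4 = (-1:ℚ) by decide,
    show CartanE7 5 5 = (2:ℚ) by decide,
    show CartanE7 5 6 = (-1:ℚ) by decide,
    show CartanE7 6 0 = (0:ℚ) by decide,
    show CartanE7 6 1 = (0:ℚ) by decide,
    show CartanE7 6 2 = (0:ℚ) by decide,
    show CartanE7 6 3 = (0:ℚ) by decide,
    show CartanE7 6 4 = (0:ℚ) by decide,
    show CartanE7 6 5 = (-1:ℚ) by decide,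
    show CartanE7 6 6 = (2:ℚ) by decide]
  ring

def tupleList : List (ℕ×ℕ×ℕ×ℕ×ℕ×ℕ×ℕ) := [(0,0,0,0,0,0,1), (0,0,0,0,0,1,0), (0,0,0,0,0,1,1), (0,0,0,0,1,0,0), (0,0,0,0,1,1,0), (0,0,0,0,1,1,1), (0,0,0,1,0,0,0), (0,0,0,1,1,0,0), (0,0,0,1,1,1,0), (0,0,0,1,1,1,1), (0,0,1,0,0,0,0), (0,0,1,1,0,0,0), (0,0,1,1,1,0,0), (0,0,1,1,1,1,0), (0,0,1,1,1,1,1), (0,1,0,0,0,0,0), (0,1,0,1,0,0,0), (0,1,0,1,1,0,0), (0,1,0,1,1,1,0), (0,1,0,1,1,1,1), (0,1,1,1,0,0,0), (0,1,1,1,1,0,0), (0,1,1,1,1,1,0), (0,1,1,1,1,1,1), (0,1,1,2,1,0,0), (0,1,1,2,1,1,0), (0,1,1,2,1,1,1), (0,1,1,2,2,1,0), (0,1,1,2,2,1,1), (0,1,1,2,2,2,1), (1,0,0,0,0,0,0), (1,0,1,0,0,0,0), (1,0,1,1,0,0,0), (1,0,1,1,1,0,0), (1,0,1,1,1,1,0),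 (1,0,1,1,1,1,1), (1,1,1,1,0,0,0), (1,1,1,1,1,0,0), (1,1,1,1,1,1,0), (1,1,1,1,1,1,1), (1,1,1,2,1,0,0), (1,1,1,2,1,1,0), (1,1,1,2,1,1,1), (1,1,1,2,2,1,0), (1,1,1,2,2,1,1), (1,1,1,2,2,2,1), (1,1,2,2,1,0,0), (1,1,2,2,1,1,0), (1,1,2,2,1,1,1), (1,1,2,2,2,1,0), (1,1,2,2,2,1,1), (1,1,2,2,2,2,1), (1,1,2,3,2,1,0), (1,1,2,3,2,1,1), (1,1,2,3,2,2,1), (1,1,2,3,3,2,1), (1,2,2,3,2,1,0), (1,2,2,3,2,1,1), (1,2,2,3,2,2,1), (1,2,2,3,3,2,1), (1,2,2,4,3,2,1), (1,2,3,4,3,2,1), (2,2,3,4,3,2,1)]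

def lamTuples : List (ℕ×ℕ×ℕ×ℕ×ℕ×ℕ×ℕ) := [(1,0,0,0,0,0,0), (1,0,1,0,0,0,0), (1,0,1,1,0,0,0), (1,0,1,1,1,0,0), (1,0,1,1,1,1,0), (1,0,1,1,1,1,1), (1,1,1,1,0,0,0), (1,1,1,1,1,0,0), (1,1,1,1,1,1,0), (1,1,1,1,1,1,1), (1,1,1,2,1,0,0), (1,1,1,2,1,1,0), (1,1,2,2,1,0,0)]

def evenList : List (ℕ×ℕ×ℕ×ℕ×ℕ×ℕ×ℕ) := tupleList.filter (fun t => t.1 % 2 == 0)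

def phi (t : ℕ×ℕ×ℕ×ℕ×ℕ×ℕ×ℕ) : Fin 7 → ℚ :=
  ![t.1, t.2.1, t.2.2.1, t.2.2.2.1, t.2.2.2.2.1, t.2.2.2.2.2.1, t.2.2.2.2.2.2]

def rootsL : List (Fin 7 → ℚ) := tupleList.map phi
def rootsKL : List (Fin 7 → ℚ) := evenList.map phi
def lamL : List (Fin 7 → ℚ) := lamTuples.map phi

lemma phi0 (t : ℕ×ℕ×ℕ×ℕ×ℕ×ℕ×ℕ) : phi t 0 = (t.1 : ℚ) := rfl
lemma phi1 (t : ℕ×ℕ×ℕ×ℕ×ℕ×ℕ×ℕ) : phi t 1 = (t.2.1 : ℚ) := rfl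
lemma phi2 (t : ℕ×ℕ×ℕ×ℕ×ℕ×ℕ×ℕ) : phi t 2 = (t.2.2.1 : ℚ) := rfl
lemma phi3 (t : ℕ×ℕ×ℕ×ℕ×ℕ×ℕ×ℕ) : phi t 3 = (t.2.2.2.1 : ℚ) := rfl
lemma phi4 (t : ℕ×ℕ×ℕ×ℕ×ℕ×ℕ×ℕ) : phi t 4 = (t.2.2.2.2.1 : ℚ) := rfl
lemma phi5 (t : ℕ×ℕ×ℕ×ℕ×ℕ×ℕ×ℕ) : phi t 5 = (t.2.2.2.2.2.1 : ℚ) := rfl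
lemma phi6 (t : ℕ×ℕ×ℕ×ℕ×ℕ×ℕ×ℕ) : phi t 6 = (t.2.2.2.2.2.2 : ℚ) := rfl

def dG : Fin 7 → ℚ := ![17, (49/2 : ℚ), 33, 48, (75/2 : ℚ), 26, (27/2 : ℚ)]
def dK : Fin 7 → ℚ := ![1, (17/2 : ℚ), 9, 16, (27/2 : ℚ), 10, (11/2 : ℚ)]

lemma complete : ∀ a < 3, ∀ b < 3, ∀ c < 4, ∀ d < 5, ∀ e < 4, ∀ f < 3, ∀ g < 2,
    a*a+b*b+c*c+d*d+e*e+f*f+g*g = 1 + (a*c + b*d + c*d + d*e + e*f + f*g) →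
    (a, b, c, d, e, f, g) ∈ tupleList := by decide

lemma quad_all : ∀ t ∈ tupleList, t.1*t.1 + t.2.1*t.2.1 + t.2.2.1*t.2.2.1 + t.2.2.2.1*t.2.2.2.1
    + t.2.2.2.2.1*t.2.2.2.2.1 + t.2.2.2.2.2.1*t.2.2.2.2.2.1 + t.2.2.2.2.2.2*t.2.2.2.2.2.2
    = 1 + (t.1*t.2.2.1 + t.2.1*t.2.2.2.1 + t.2.2.1*t.2.2.2.1 + t.2.2.2.1*t.2.2.2.2.1
      + t.2.2.2.2.1*t.2.2.2.2.2.1 + t.2.2.2.2.2.1*t.2.2.2.2.2.2) := by decide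

lemma nodup_tl : tupleList.Nodup := by decide

lemma lam_iff : ∀ t ∈ tupleList, (t ∈ lamTuples ↔
    t.2.1 + t.2.2.1 + t.2.2.2.1 + t.2.2.2.2.1 + t.2.2.2.2.2.1 + t.2.2.2.2.2.2 < 7 * t.1) := by decide

lemma nodup_lam : lamTuples.Nodup := by decide

lemma lam_sub : ∀ t ∈ lamTuples, t ∈ tupleList := by decide

lemma natG0 : (tupleList.map (fun t => t.1)).sum = 34 := by decide
lemma natG1 : (tupleList.map (fun t => t.2.1)).sum = 49 := by decide
lemma natG2 : (tupleList.map (fun t => t.2.2.1)).sum = 66 := by decide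
lemma natG3 : (tupleList.map (fun t => t.2.2.2.1)).sum = 96 := by decide
lemma natG4 : (tupleList.map (fun t => t.2.2.2.2.1)).sum = 75 := by decide
lemma natG5 : (tupleList.map (fun t => t.2.2.2.2.2.1)).sum = 52 := by decide
lemma natG6 : (tupleList.map (fun t => t.2.2.2.2.2.2)).sum = 27 := by decide
lemma natK0 : (evenList.map (fun t => t.1)).sum = 2 := by decide
lemma natK1 : (evenList.map (fun t => t.2.1)).sum = 17 := by decide
lemma natK2 : (evenList.map (fun t => t.2.2.1)).sum = 18 := by decide
lemma natK3 : (evenList.map (fun t => t.2.2.2.1)).sum = 32 := by decide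
lemma natK4 : (evenList.map (fun t => t.2.2.2.2.1)).sum = 27 := by decide
lemma natK5 : (evenList.map (fun t => t.2.2.2.2.2.1)).sum = 20 := by decide
lemma natK6 : (evenList.map (fun t => t.2.2.2.2.2.2)).sum = 11 := by decide

lemma phi_inj : Function.Injective phi := by
  rintro ⟨a1,a2,a3,a4,a5,a6,a7⟩ ⟨b1,b2,b3,b4,b5,b6,b7⟩ h
  have h0 := congrFun h 0
  have h1 := congrFun h 1
  have h2 := congrFun h 2
  have h3 := congrFun h 3
  have h4 := congrFun h 4
  have h5 := congrFun h 5
  have h6 := congrFun h 6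
  simp only [phi0, phi1, phi2, phi3, phi4, phi5, phi6, Nat.cast_inj] at h0 h1 h2 h3 h4 h5 h6
  simp_all

lemma nodup_rootsL : rootsL.Nodup := nodup_tl.map phi_inj
lemma nodup_evenList : evenList.Nodup := nodup_tl.filter _
lemma nodup_rootsKL : rootsKL.Nodup := nodup_evenList.map phi_inj
lemma nodup_lamL : lamL.Nodup := nodup_lam.map phi_inj

lemma sum_coord (l : List (ℕ×ℕ×ℕ×ℕ×ℕ×ℕ×ℕ)) (i : Fin 7) (f : ℕ×ℕ×ℕ×ℕ×ℕ×ℕ×ℕ → ℕ)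
    (hf : ∀ t, phi t i = (f t : ℚ)) :
    ((l.map phi).map (fun v => v i)).sum = ((l.map f).sum : ℚ) := by
  rw [List.map_map, show ((fun v => v i) ∘ phi) = (fun n : ℕ => (n:ℚ)) ∘ f from funext hf,
    ← List.map_map]
  exact (Nat.cast_list_sum _).symm

lemma dGv0 : dG 0 = 17 := rfl
lemma dGv1 : dG 1 = (49/2 : ℚ) := rfl
lemma dGv2 : dG 2 = 33 := rfl
lemma dGv3 : dG 3 = 48 := rfl
lemma dGv4 : dG 4 = (75/2 : ℚ) := rfl
lemma dGv5 : dG 5 = 26 := rfl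
lemma dGv6 : dG 6 = (27/2 : ℚ) := rfl
lemma dKv0 : dK 0 = 1 := rfl
lemma dKv1 : dK 1 = (17/2 : ℚ) := rfl
lemma dKv2 : dK 2 = 9 := rfl
lemma dKv3 : dK 3 = 16 := rfl
lemma dKv4 : dK 4 = (27/2 : ℚ) := rfl
lemma dKv5 : dK 5 = 10 := rfl
lemma dKv6 : dK 6 = (11/2 : ℚ) := rfl

lemma BE7_dK (v : Fin 7 → ℚ) :
    BE7 v dK = -7 * v 0 + v 1 + v 2 + v 3 + v 4 + v 5 + v 6 := by
  rw [BE7_expand, dKv0, dKv1, dKv2, dKv3, dKv4, dKv5, dKv6]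
  ring

lemma rootsL_props : ∀ v ∈ rootsL, (IsRootE7 v ∧ ∀ i, 0 ≤ v i) := by
  intro v hv
  obtain ⟨t, ht, rfl⟩ := List.mem_map.1 hv
  have hq := quad_all t ht
  refine ⟨⟨fun i => ?_, ?_⟩, fun i => ?_⟩
  · fin_cases i
    · exact ⟨(t.1 : ℤ), by push_cast; rfl⟩
    · exact ⟨(t.2.1 : ℤ), by push_cast; rfl⟩
    · exact ⟨(t.2.2.1 : ℤ), by push_cast; rfl⟩
    · exact ⟨(t.2.2.2.1 : ℤ), by push_cast; rfl⟩
    · exact ⟨(t.2.2.2.2.1 : ℤ), by push_cast; rfl⟩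
    · exact ⟨(t.2.2.2.2.2.1 : ℤ), by push_cast; rfl⟩
    · exact ⟨(t.2.2.2.2.2.2 : ℤ), by push_cast; rfl⟩
  · rw [BE7_expand, phi0, phi1, phi2, phi3, phi4, phi5, phi6]
    have hc : ((t.1*t.1 + t.2.1*t.2.1 + t.2.2.1*t.2.2.1 + t.2.2.2.1*t.2.2.2.1
        + t.2.2.2.2.1*t.2.2.2.2.1 + t.2.2.2.2.2.1*t.2.2.2.2.2.1 + t.2.2.2.2.2.2*t.2.2.2.2.2.2 : ℕ) : ℚ)
        = ((1 + (t.1*t.2.2.1 + t.2.1*t.2.2.2.1 + t.2.2.1*t.2.2.2.1 + t.2.2.2.1*t.2.2.2.2.1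
        + t.2.2.2.2.1*t.2.2.2.2.2.1 + t.2.2.2.2.2.1*t.2.2.2.2.2.2) : ℕ) : ℚ) := by
      exact_mod_cast congrArg (fun n : ℕ => (n:ℚ)) hq
    push_cast at hc
    linear_combination 2 * hc
  · fin_cases i
    · exact show (0:ℚ) ≤ ((t.1 : ℕ) : ℚ) from Nat.cast_nonneg _
    · exact show (0:ℚ) ≤ ((t.2.1 : ℕ) : ℚ) from Nat.cast_nonneg _
    · exact show (0:ℚ) ≤ ((t.2.2.1 : ℕ) : ℚ) from Nat.cast_nonneg _
    · exact show (0:ℚ) ≤ ((t.2.2.2.1 : ℕ) : ℚ) from Nat.cast_nonneg _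
    · exact show (0:ℚ) ≤ ((t.2.2.2.2.1 : ℕ) : ℚ) from Nat.cast_nonneg _
    · exact show (0:ℚ) ≤ ((t.2.2.2.2.2.1 : ℕ) : ℚ) from Nat.cast_nonneg _
    · exact show (0:ℚ) ≤ ((t.2.2.2.2.2.2 : ℕ) : ℚ) from Nat.cast_nonneg _

lemma mem_rootsL (v : Fin 7 → ℚ) (hr : IsRootE7 v) (hpos : ∀ i, 0 ≤ v i) : v ∈ rootsL := by
  obtain ⟨hint, h2⟩ := hr
  choose n hn using hint
  have hn0 : ∀ i, (0:ℤ) ≤ n i := by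
    intro i
    have := hpos i
    rw [hn i] at this
    exact_mod_cast this
  set a : Fin 7 → ℕ := fun i => (n i).toNat with ha_def
  have ha : ∀ i, v i = (a i : ℚ) := by
    intro i
    show v i = (((n i).toNat : ℕ) : ℚ)
    rw [hn i]
    exact_mod_cast (Int.toNat_of_nonneg (hn0 i)).symm
  have hexp : 2*(v 0*v 0 + v 1*v 1 + v 2*v 2 + v 3*v 3 + v 4*v 4 + v 5*v 5 + v 6*v 6)
      - (v 0*v 2 + v 2*v 0) - (v 1*v 3 + v 3*v 1) - (v 2*v 3 + v 3*v 2)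
      - (v 3*v 4 + v 4*v 3) - (v 4*v 5 + v 5*v 4) - (v 5*v 6 + v 6*v 5) = 2 := by
    rw [← BE7_expand v v]; exact h2
  have hb0 : (v 0)^2 ≤ 4 := by
    have key : 4 - (v 0)^2 = (3) * (v 0 + ((-2/3 : ℚ)) * v 2)^2 + (4) * (v 1 + ((-1/2 : ℚ)) * v 3)^2 + ((8/3 : ℚ)) * (v 2 + ((-3/4 : ℚ)) * v 3)^2 + ((3/2 : ℚ)) * (v 3 + ((-4/3 : ℚ)) * v 4)^2 + ((4/3 : ℚ)) * (v 4 + ((-3/2 : ℚ)) * v 5)^2 + (v 5 + (-2) * v 6)^2 := by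
      linear_combination (-(2)) * hexp
    nlinarith [sq_nonneg (v 0 + ((-2/3 : ℚ)) * v 2), sq_nonneg (v 1 + ((-1/2 : ℚ)) * v 3), sq_nonneg (v 2 + ((-3/4 : ℚ)) * v 3), sq_nonneg (v 3 + ((-4/3 : ℚ)) * v 4), sq_nonneg (v 4 + ((-3/2 : ℚ)) * v 5), sq_nonneg (v 5 + (-2) * v 6)]
  have hb1 : (v 1)^2 ≤ 7 := by
    have key : 7 - (v 1)^2 = (7) * (v 0 + ((-1/2 : ℚ)) * v 2)^2 + (6) * (v 1 + ((-7/12 : ℚ)) * v 3)^2 + ((21/4 : ℚ)) * (v 2 + ((-2/3 : ℚ)) * v 3)^2 + ((21/8 : ℚ)) * (v 3 + ((-4/3 : ℚ)) * v 4)^2 + ((7/3 : ℚ)) * (v 4 + ((-3/2 : ℚ)) * v 5)^2 + ((7/4 : ℚ)) * (v 5 + (-2) * v 6)^2 := by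
      linear_combination (-((7/2 : ℚ))) * hexp
    nlinarith [sq_nonneg (v 0 + ((-1/2 : ℚ)) * v 2), sq_nonneg (v 1 + ((-7/12 : ℚ)) * v 3), sq_nonneg (v 2 + ((-2/3 : ℚ)) * v 3), sq_nonneg (v 3 + ((-4/3 : ℚ)) * v 4), sq_nonneg (v 4 + ((-3/2 : ℚ)) * v 5), sq_nonneg (v 5 + (-2) * v 6)]
  have hb2 : (v 2)^2 ≤ 12 := by
    have key : 12 - (v 2)^2 = (12) * (v 0 + ((-1/2 : ℚ)) * v 2)^2 + (12) * (v 1 + ((-1/2 : ℚ)) * v 3)^2 + (8) * (v 2 + ((-3/4 : ℚ)) * v 3)^2 + ((9/2 : ℚ)) * (v 3 + ((-4/3 : ℚ)) * v 4)^2 + (4) * (v 4 + ((-3/2 : ℚ)) * v 5)^2 + (3) * (v 5 + (-2) * v 6)^2 := by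
      linear_combination (-(6)) * hexp
    nlinarith [sq_nonneg (v 0 + ((-1/2 : ℚ)) * v 2), sq_nonneg (v 1 + ((-1/2 : ℚ)) * v 3), sq_nonneg (v 2 + ((-3/4 : ℚ)) * v 3), sq_nonneg (v 3 + ((-4/3 : ℚ)) * v 4), sq_nonneg (v 4 + ((-3/2 : ℚ)) * v 5), sq_nonneg (v 5 + (-2) * v 6)]
  have hb3 : (v 3)^2 ≤ 24 := by
    have key : 24 - (v 3)^2 = (24) * (v 0 + ((-1/2 : ℚ)) * v 2)^2 + (24) * (v 1 + ((-1/2 : ℚ)) * v 3)^2 + (18) * (v 2 + ((-2/3 : ℚ)) * v 3)^2 + (9) * (v 3 + ((-4/3 : ℚ)) * v 4)^2 + (8) * (v 4 + ((-3/2 : ℚ)) * v 5)^2 + (6) * (v 5 + (-2) * v 6)^2 := by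
      linear_combination (-(12)) * hexp
    nlinarith [sq_nonneg (v 0 + ((-1/2 : ℚ)) * v 2), sq_nonneg (v 1 + ((-1/2 : ℚ)) * v 3), sq_nonneg (v 2 + ((-2/3 : ℚ)) * v 3), sq_nonneg (v 3 + ((-4/3 : ℚ)) * v 4), sq_nonneg (v 4 + ((-3/2 : ℚ)) * v 5), sq_nonneg (v 5 + (-2) * v 6)]
  have hb4 : (v 4)^2 ≤ 15 := by
    have key : 15 - (v 4)^2 = (15) * (v 0 + ((-1/2 : ℚ)) * v 2)^2 + (15) * (v 1 + ((-1/2 : ℚ)) * v 3)^2 + ((45/4 : ℚ)) * (v 2 + ((-2/3 : ℚ)) * v 3)^2 + ((25/4 : ℚ)) * (v 3 + ((-6/5 : ℚ)) * v 4)^2 + (5) * (v 4 + ((-3/2 : ℚ)) * v 5)^2 + ((15/4 : ℚ)) * (v 5 + (-2) * v 6)^2 := by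
      linear_combination (-((15/2 : ℚ))) * hexp
    nlinarith [sq_nonneg (v 0 + ((-1/2 : ℚ)) * v 2), sq_nonneg (v 1 + ((-1/2 : ℚ)) * v 3), sq_nonneg (v 2 + ((-2/3 : ℚ)) * v 3), sq_nonneg (v 3 + ((-6/5 : ℚ)) * v 4), sq_nonneg (v 4 + ((-3/2 : ℚ)) * v 5), sq_nonneg (v 5 + (-2) * v 6)]
  have hb5 : (v 5)^2 ≤ 8 := by
    have key : 8 - (v 5)^2 = (8) * (v 0 + ((-1/2 : ℚ)) * v 2)^2 + (8) * (v 1 + ((-1/2 : ℚ)) * v 3)^2 + (6) * (v 2 + ((-2/3 : ℚ)) * v 3)^2 + ((10/3 : ℚ)) * (v 3 + ((-6/5 : ℚ)) * v 4)^2 + ((16/5 : ℚ)) * (v 4 + ((-5/4 : ℚ)) * v 5)^2 + (2) * (v 5 + (-2) * v 6)^2 := by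
      linear_combination (-(4)) * hexp
    nlinarith [sq_nonneg (v 0 + ((-1/2 : ℚ)) * v 2), sq_nonneg (v 1 + ((-1/2 : ℚ)) * v 3), sq_nonneg (v 2 + ((-2/3 : ℚ)) * v 3), sq_nonneg (v 3 + ((-6/5 : ℚ)) * v 4), sq_nonneg (v 4 + ((-5/4 : ℚ)) * v 5), sq_nonneg (v 5 + (-2) * v 6)]
  have hb6 : (v 6)^2 ≤ 3 := by
    have key : 3 - (v 6)^2 = (3) * (v 0 + ((-1/2 : ℚ)) * v 2)^2 + (3) * (v 1 + ((-1/2 : ℚ)) * v 3)^2 + ((9/4 : ℚ)) * (v 2 + ((-2/3 : ℚ)) * v 3)^2 + ((5/4 : ℚ)) * (v 3 + ((-6/5 : ℚ)) * v 4)^2 + ((6/5 : ℚ)) * (v 4 + ((-5/4 : ℚ)) * v 5)^2 + ((9/8 : ℚ)) * (v 5 + ((-4/3 : ℚ)) * v 6)^2 := by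
      linear_combination (-((3/2 : ℚ))) * hexp
    nlinarith [sq_nonneg (v 0 + ((-1/2 : ℚ)) * v 2), sq_nonneg (v 1 + ((-1/2 : ℚ)) * v 3), sq_nonneg (v 2 + ((-2/3 : ℚ)) * v 3), sq_nonneg (v 3 + ((-6/5 : ℚ)) * v 4), sq_nonneg (v 4 + ((-5/4 : ℚ)) * v 5), sq_nonneg (v 5 + ((-4/3 : ℚ)) * v 6)]
  have hA0 : a 0 < 3 := by
    rw [ha 0] at hb0
    by_contra hcon
    push_neg at hcon
    have hc : (3:ℚ) ≤ (a 0 : ℚ) := by exact_mod_cast hcon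
    have h0 : (0:ℚ) ≤ (a 0 : ℚ) := Nat.cast_nonneg _
    nlinarith [hb0, hc, h0]
  have hA1 : a 1 < 3 := by
    rw [ha 1] at hb1
    by_contra hcon
    push_neg at hcon
    have hc : (3:ℚ) ≤ (a 1 : ℚ) := by exact_mod_cast hcon
    have h0 : (0:ℚ) ≤ (a 1 : ℚ) := Nat.cast_nonneg _
    nlinarith [hb1, hc, h0]
  have hA2 : a 2 < 4 := by
    rw [ha 2] at hb2
    by_contra hcon
    push_neg at hcon
    have hc : (4:ℚ) ≤ (a 2 : ℚ) := by exact_mod_cast hcon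
    have h0 : (0:ℚ) ≤ (a 2 : ℚ) := Nat.cast_nonneg _
    nlinarith [hb2, hc, h0]
  have hA3 : a 3 < 5 := by
    rw [ha 3] at hb3
    by_contra hcon
    push_neg at hcon
    have hc : (5:ℚ) ≤ (a 3 : ℚ) := by exact_mod_cast hcon
    have h0 : (0:ℚ) ≤ (a 3 : ℚ) := Nat.cast_nonneg _
    nlinarith [hb3, hc, h0]
  have hA4 : a 4 < 4 := by
    rw [ha 4] at hb4
    by_contra hcon
    push_neg at hcon
    have hc : (4:ℚ) ≤ (a 4 : ℚ) := by exact_mod_cast hcon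
    have h0 : (0:ℚ) ≤ (a 4 : ℚ) := Nat.cast_nonneg _
    nlinarith [hb4, hc, h0]
  have hA5 : a 5 < 3 := by
    rw [ha 5] at hb5
    by_contra hcon
    push_neg at hcon
    have hc : (3:ℚ) ≤ (a 5 : ℚ) := by exact_mod_cast hcon
    have h0 : (0:ℚ) ≤ (a 5 : ℚ) := Nat.cast_nonneg _
    nlinarith [hb5, hc, h0]
  have hA6 : a 6 < 2 := by
    rw [ha 6] at hb6
    by_contra hcon
    push_neg at hcon
    have hc : (2:ℚ) ≤ (a 6 : ℚ) := by exact_mod_cast hcon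
    have h0 : (0:ℚ) ≤ (a 6 : ℚ) := Nat.cast_nonneg _
    nlinarith [hb6, hc, h0]
  have hq : a 0*a 0 + a 1*a 1 + a 2*a 2 + a 3*a 3 + a 4*a 4 + a 5*a 5 + a 6*a 6
      = 1 + (a 0*a 2 + a 1*a 3 + a 2*a 3 + a 3*a 4 + a 4*a 5 + a 5*a 6) := by
    have hexp' := hexp
    simp only [ha] at hexp'
    have hcast : ((a 0*a 0 + a 1*a 1 + a 2*a 2 + a 3*a 3 + a 4*a 4 + a 5*a 5 + a 6*a 6 : ℕ) : ℚ)
        = ((1 + (a 0*a 2 + a 1*a 3 + a 2*a 3 + a 3*a 4 + a 4*a 5 + a 5*a 6) : ℕ) : ℚ) := by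
      push_cast
      linear_combination hexp' / 2
    exact_mod_cast hcast
  have ht := complete (a 0) hA0 (a 1) hA1 (a 2) hA2 (a 3) hA3 (a 4) hA4 (a 5) hA5 (a 6) hA6 hq
  have hv : v = phi (a 0, a 1, a 2, a 3, a 4, a 5, a 6) := by
    funext i
    fin_cases i <;> simp only [ha] <;> rfl
  rw [hv]
  exact List.mem_map_of_mem (f := phi) ht

theorem stmt14
    (Φplus : Finset (Fin 7 → ℚ))
    (hΦplus : ∀ v, v ∈ Φplus ↔ IsRootE7 v ∧ ∀ i, 0 ≤ v i)
    (ΦKplus : Finset (Fin 7 → ℚ))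
    (hΦKplus : ∀ v, v ∈ ΦKplus ↔ v ∈ Φplus ∧ ∃ n : ℤ, v 0 = 2 * n)
    (δG δK : Fin 7 → ℚ)
    (hδG : δG = (2⁻¹ : ℚ) • ∑ v ∈ Φplus, v)
    (hδK : δK = (2⁻¹ : ℚ) • ∑ v ∈ ΦKplus, v)
    (Λ : Finset (Fin 7 → ℚ))
    (hΛ : ∀ v, v ∈ Λ ↔ v ∈ Φplus ∧ BE7 v δK < 0) :
    BE7 (δG - δK) (δG - δK) = 128 ∧
    Λ.card = 13 ∧
    (∑ v ∈ Λ, BE7 v δK) = -41 ∧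
    2 * ((1 / 36 : ℚ) * BE7 (δG - δK) (δG - δK)) +
        4 * ((1 / 36 : ℚ) * ∑ v ∈ Λ, BE7 v δK) + 64 / 8 = 95 / 9 := by
  classical
  have hPeq : Φplus = rootsL.toFinset := by
    ext v
    rw [hΦplus, List.mem_toFinset]
    exact ⟨fun h => mem_rootsL v h.1 h.2, fun h => rootsL_props v h⟩
  have hKeq : ΦKplus = rootsKL.toFinset := by
    ext v
    rw [hΦKplus, hPeq, List.mem_toFinset, List.mem_toFinset]
    constructor
    · rintro ⟨hv, m, hm⟩
      obtain ⟨t, ht, rfl⟩ := List.mem_map.1 hv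
      refine List.mem_map_of_mem (f := phi) (List.mem_filter.2 ⟨ht, ?_⟩)
      rw [phi0] at hm
      have hmz : (t.1 : ℤ) = 2 * m := by exact_mod_cast hm
      have : t.1 % 2 = 0 := by omega
      simpa using this
    · intro hv
      obtain ⟨t, ht, rfl⟩ := List.mem_map.1 hv
      obtain ⟨ht', hp⟩ := List.mem_filter.1 ht
      refine ⟨List.mem_map_of_mem (f := phi) ht', ((t.1 / 2 : ℕ) : ℤ), ?_⟩
      have hp' : t.1 % 2 = 0 := by simpa using hp
      have h2 : t.1 = 2 * (t.1 / 2) := by omega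
      rw [phi0]
      push_cast
      exact_mod_cast congrArg (fun n : ℕ => (n:ℚ)) h2
  have hKsC : ∀ i : Fin 7, δK i = 2⁻¹ * (((evenList.map phi).map (fun v => v i)).sum) := by
    intro i
    rw [hδK, hKeq]
    simp only [Pi.smul_apply, smul_eq_mul, Finset.sum_apply]
    rw [List.sum_toFinset _ nodup_rootsKL]
    rfl
  have hGsC : ∀ i : Fin 7, δG i = 2⁻¹ * (((tupleList.map phi).map (fun v => v i)).sum) := by
    intro i
    rw [hδG, hPeq]
    simp only [Pi.smul_apply, smul_eq_mul, Finset.sum_apply]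
    rw [List.sum_toFinset _ nodup_rootsL]
    rfl
  have hK0 : δK 0 = dK 0 := by
    rw [hKsC 0, sum_coord evenList 0 (fun t => t.1) (fun t => rfl), natK0, dKv0]
    norm_num
  have hK1 : δK 1 = dK 1 := by
    rw [hKsC 1, sum_coord evenList 1 (fun t => t.2.1) (fun t => rfl), natK1, dKv1]
    norm_num
  have hK2 : δK 2 = dK 2 := by
    rw [hKsC 2, sum_coord evenList 2 (fun t => t.2.2.1) (fun t => rfl), natK2, dKv2]
    norm_num
  have hK3 : δK 3 = dK 3 := by
    rw [hKsC 3, sum_coord evenList 3 (fun t => t.2.2.2.1) (fun t => rfl), natK3, dKv3]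
    norm_num
  have hK4 : δK 4 = dK 4 := by
    rw [hKsC 4, sum_coord evenList 4 (fun t => t.2.2.2.2.1) (fun t => rfl), natK4, dKv4]
    norm_num
  have hK5 : δK 5 = dK 5 := by
    rw [hKsC 5, sum_coord evenList 5 (fun t => t.2.2.2.2.2.1) (fun t => rfl), natK5, dKv5]
    norm_num
  have hK6 : δK 6 = dK 6 := by
    rw [hKsC 6, sum_coord evenList 6 (fun t => t.2.2.2.2.2.2) (fun t => rfl), natK6, dKv6]
    norm_num
  have hG0 : δG 0 = dG 0 := by
    rw [hGsC 0, sum_coord tupleList 0 (fun t => t.1) (fun t => rfl), natG0, dGv0]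
    norm_num
  have hG1 : δG 1 = dG 1 := by
    rw [hGsC 1, sum_coord tupleList 1 (fun t => t.2.1) (fun t => rfl), natG1, dGv1]
    norm_num
  have hG2 : δG 2 = dG 2 := by
    rw [hGsC 2, sum_coord tupleList 2 (fun t => t.2.2.1) (fun t => rfl), natG2, dGv2]
    norm_num
  have hG3 : δG 3 = dG 3 := by
    rw [hGsC 3, sum_coord tupleList 3 (fun t => t.2.2.2.1) (fun t => rfl), natG3, dGv3]
    norm_num
  have hG4 : δG 4 = dG 4 := by
    rw [hGsC 4, sum_coord tupleList 4 (fun t => t.2.2.2.2.1) (fun t => rfl), natG4, dGv4]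
    norm_num
  have hG5 : δG 5 = dG 5 := by
    rw [hGsC 5, sum_coord tupleList 5 (fun t => t.2.2.2.2.2.1) (fun t => rfl), natG5, dGv5]
    norm_num
  have hG6 : δG 6 = dG 6 := by
    rw [hGsC 6, sum_coord tupleList 6 (fun t => t.2.2.2.2.2.2) (fun t => rfl), natG6, dGv6]
    norm_num
  have hdK : δK = dK := by
    funext i
    fin_cases i
    · exact hK0
    · exact hK1
    · exact hK2
    · exact hK3
    · exact hK4
    · exact hK5
    · exact hK6
  have hdG : δG = dG := by
    funext i
    fin_cases i
    · exact hG0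
    · exact hG1
    · exact hG2
    · exact hG3
    · exact hG4
    · exact hG5
    · exact hG6
  have hLeq : Λ = lamL.toFinset := by
    ext v
    rw [hΛ, hPeq, List.mem_toFinset, List.mem_toFinset, hdK]
    constructor
    · rintro ⟨hv, hneg⟩
      obtain ⟨t, ht, rfl⟩ := List.mem_map.1 hv
      refine List.mem_map_of_mem (f := phi) ((lam_iff t ht).2 ?_)
      rw [BE7_dK, phi0, phi1, phi2, phi3, phi4, phi5, phi6] at hneg
      have hlt : ((t.2.1:ℚ) + t.2.2.1 + t.2.2.2.1 + t.2.2.2.2.1 + t.2.2.2.2.2.1 + t.2.2.2.2.2.2)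
          < 7 * (t.1:ℚ) := by linarith
      exact_mod_cast hlt
    · intro hv
      obtain ⟨t, ht, rfl⟩ := List.mem_map.1 hv
      have ht' := lam_sub t ht
      refine ⟨List.mem_map_of_mem (f := phi) ht', ?_⟩
      have hl := (lam_iff t ht').1 ht
      rw [BE7_dK, phi0, phi1, phi2, phi3, phi4, phi5, phi6]
      have hlt : ((t.2.1:ℚ) + t.2.2.1 + t.2.2.2.1 + t.2.2.2.2.1 + t.2.2.2.2.2.1 + t.2.2.2.2.2.2)
          < 7 * (t.1:ℚ) := by exact_mod_cast hl
      linarith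
  have h128 : BE7 (δG - δK) (δG - δK) = 128 := by
    rw [hdG, hdK, BE7_expand]
    simp only [Pi.sub_apply, dGv0, dGv1, dGv2, dGv3, dGv4, dGv5, dGv6,
      dKv0, dKv1, dKv2, dKv3, dKv4, dKv5, dKv6]
    norm_num
  have hcard : Λ.card = 13 := by
    rw [hLeq, List.card_toFinset, nodup_lamL.dedup]
    rfl
  have hsum : (∑ v ∈ Λ, BE7 v δK) = -41 := by
    rw [hdK, hLeq, List.sum_toFinset _ nodup_lamL,
      show lamL = lamTuples.map phi from rfl, List.map_map,
      show ((fun v => BE7 v dK) ∘ phi) = fun t : ℕ×ℕ×ℕ×ℕ×ℕ×ℕ×ℕ =>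
        -7*(t.1:ℚ) + t.2.1 + t.2.2.1 + t.2.2.2.1 + t.2.2.2.2.1 + t.2.2.2.2.2.1 + t.2.2.2.2.2.2 from
        funext fun t => by
          simp only [Function.comp_apply, BE7_dK, phi0, phi1, phi2, phi3, phi4, phi5, phi6]]
    simp only [lamTuples, List.map_cons, List.map_nil, List.sum_cons, List.sum_nil]
    norm_num
  refine ⟨h128, hcard, hsum, ?_⟩
  rw [h128, hsum]
  norm_num
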